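/- Let k ≥ 2. For every binary sequence α_1, …, α_{k−1} ∈ {0,1}, there are induced subgraphs Y_1, …, Y_{k−1} of X_k, isomorphic to X_1, …, X_{k−1} respectively, on pairwise disjoint vertex sets with no edges of X_k between any two of them, such that for every i ∈ {1, …, k−1}: if α_i = 1 then the root side of Y_i is contained in the root side of X_k, and if α_i = 0 then the non-root side of Y_i is contained in the root side of X_k. -/

import Mathlib

/-! ### The graphs `X_k` -/

/-- Vertex set of the graph `X_k` (with a junk value at `k = 0`). -/
def XV : ℕ → Type
  | 0 => PUnit
  | 1 => PUnit
  | 2 => Bool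
  | (n+3) => Option (XV (n+2) ⊕ XV (n+2))

/-- The root of `X_k`. -/
def XRoot : (k : ℕ) → XV k
  | 0 => PUnit.unit
  | 1 => PUnit.unit
  | 2 => true
  | (_+3) => none

/-- The side of a vertex of `X_k`: `true` is the root side, `false` the non-root side. -/
def XSide : (k : ℕ) → XV k → Bool
  | 0, _ => true
  | 1, _ => true
  | 2, v => v
  | (_+3), none => true
  | (n+3), some (Sum.inl x) => !(XSide (n+2) x)
  | (n+3), some (Sum.inr x) => XSide (n+2) x

/-- Base adjacency relation of `X_k`:  for `k ≥ 3`, `X_k` consists of two disjoint copies of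
`X_{k-1}` with no edges in between, together with a root vertex joined to the root side of the
first copy and to the non-root side of the second copy. -/
def XRel : (k : ℕ) → XV k → XV k → Prop
  | 0, _, _ => False
  | 1, _, _ => False
  | 2, u, v => u ≠ v
  | (n+3), none, some (Sum.inl x) => XSide (n+2) x = true
  | (n+3), none, some (Sum.inr x) => XSide (n+2) x = false
  | (n+3), some (Sum.inl x), none => XSide (n+2) x = true
  | (n+3), some (Sum.inr x), none => XSide (n+2) x = false
  | (n+3), some (Sum.inl x), some (Sum.inl y) => XRel (n+2) x y
  | (n+3), some (Sum.inr x), some (Sum.inr y) => XRel (n+2) x y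
  | (_+3), _, _ => False

/-- The graph `X_k`. -/
def XGraph (k : ℕ) : SimpleGraph (XV k) := SimpleGraph.fromRel (XRel k)

/-- Inclusion of a copy of `X_{n+2}` into `X_{n+3}`: `inr` copy if `c`, else `inl` copy. -/
def sumEmb (n : ℕ) (c : Bool) : XGraph (n+2) ↪g XGraph (n+3) where
  toFun x := some (bif c then Sum.inr x else Sum.inl x)
  inj' a b h := by
    cases c
    · exact Sum.inl.inj (Option.some.inj h)
    · exact Sum.inr.inj (Option.some.inj h)
  map_rel_iff' := by
    intro a b
    cases c
    · show (XGraph (n+3)).Adj (some (Sum.inl a)) (some (Sum.inl b)) ↔ (XGraph (n+2)).Adj a b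
      rw [XGraph, XGraph, SimpleGraph.fromRel_adj]
      show (some (Sum.inl a) : XV (n+3)) ≠ some (Sum.inl b) ∧ _ ↔ _
      constructor
      · rintro ⟨h1, h2⟩; exact ⟨fun h => h1 (by rw [h]), h2⟩
      · rintro ⟨h1, h2⟩; exact ⟨fun h => h1 (Sum.inl.inj (Option.some.inj h)), h2⟩
    · show (XGraph (n+3)).Adj (some (Sum.inr a)) (some (Sum.inr b)) ↔ (XGraph (n+2)).Adj a b
      rw [XGraph, XGraph, SimpleGraph.fromRel_adj]
      show (some (Sum.inr a) : XV (n+3)) ≠ some (Sum.inr b) ∧ _ ↔ _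
      constructor
      · rintro ⟨h1, h2⟩; exact ⟨fun h => h1 (by rw [h]), h2⟩
      · rintro ⟨h1, h2⟩; exact ⟨fun h => h1 (Sum.inr.inj (Option.some.inj h)), h2⟩

lemma sumEmb_ne (n : ℕ) {c d : Bool} (h : c ≠ d) (x y : XV (n+2)) :
    sumEmb n c x ≠ sumEmb n d y := by
  cases c <;> cases d
  · exact absurd rfl h
  · intro hEq
    have hEq' : (some (Sum.inl x) : XV (n+3)) = some (Sum.inr y) := hEq
    simp at hEq'
  · intro hEq
    have hEq' : (some (Sum.inr x) : XV (n+3)) = some (Sum.inl y) := hEq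
    simp at hEq'
  · exact absurd rfl h

lemma sumEmb_not_adj (n : ℕ) {c d : Bool} (h : c ≠ d) (x y : XV (n+2)) :
    ¬ (XGraph (n+3)).Adj (sumEmb n c x) (sumEmb n d y) := by
  intro hA
  obtain ⟨-, h2 | h2⟩ := (SimpleGraph.fromRel_adj (XRel (n+3)) _ _).mp hA <;> cases c <;> cases d <;> first | exact absurd rfl h | exact h2

lemma XSide_sumEmb (n : ℕ) (c : Bool) (x : XV (n+2)) :
    XSide (n+3) (sumEmb n c x) = bif c then XSide (n+2) x else !(XSide (n+2) x) := by
  cases c <;> rfl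

lemma choose_cb (n : ℕ) (a β : Bool) :
    ∃ c β' : Bool,
      (∀ x : XV (n+2),
        (a = true → XSide (n+2) x = true → XSide (n+3) (sumEmb n c x) = β) ∧
        (a = false → XSide (n+2) x = false → XSide (n+3) (sumEmb n c x) = β)) ∧
      (∀ y : XV (n+2), XSide (n+2) y = β' → XSide (n+3) (sumEmb n (!c) y) = β) := by
  refine ⟨a == β, bif (a == β) then !β else β, fun x => ⟨?_, ?_⟩, fun y hy => ?_⟩
  · rintro rfl hx; rw [XSide_sumEmb, hx]; cases β <;> rfl
  · rintro rfl hx; rw [XSide_sumEmb, hx]; cases β <;> rfl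
  · rw [XSide_sumEmb, hy]; cases a <;> cases β <;> rfl

def embBase (β : Bool) : XGraph 1 ↪g XGraph 2 where
  toFun _ := β
  inj' _ _ _ := rfl
  map_rel_iff' := by
    intro a b
    constructor
    · intro h; exact absurd rfl h.ne
    · intro h; exact absurd rfl h.ne

theorem key : ∀ (n : ℕ) (β : Bool) (α : Fin (n+1) → Bool),
    ∃ e : (i : Fin (n+1)) → (XGraph ((i : ℕ) + 1) ↪g XGraph (n+2)),
      (∀ i j : Fin (n+1), i ≠ j → ∀ x y, e i x ≠ e j y) ∧
      (∀ i j : Fin (n+1), i ≠ j → ∀ x y, ¬ (XGraph (n+2)).Adj (e i x) (e j y)) ∧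
      (∀ i : Fin (n+1), ∀ x : XV ((i : ℕ) + 1),
        (α i = true → XSide ((i : ℕ) + 1) x = true → XSide (n+2) (e i x) = β) ∧
        (α i = false → XSide ((i : ℕ) + 1) x = false → XSide (n+2) (e i x) = β)) := by
  intro n
  induction n with
  | zero =>
    intro β α
    refine ⟨fun i => match i with | ⟨0, _⟩ => embBase β, ?_, ?_, ?_⟩
    · intro i j hij; exact absurd (Subsingleton.elim (α := Fin 1) i j) hij
    · intro i j hij; exact absurd (Subsingleton.elim (α := Fin 1) i j) hij
    · intro i x
      match i with
      | ⟨0, h⟩ => exact ⟨fun _ _ => rfl, fun _ _ => rfl⟩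
  | succ n ih =>
    intro β α
    obtain ⟨c, β', htop, hbot⟩ := choose_cb n (α (Fin.last (n+1))) β
    obtain ⟨e', h1, h2, h3⟩ := ih β' (fun i => α i.castSucc)
    have hcd : c ≠ !c := by cases c <;> simp
    have hdc : (!c) ≠ c := by cases c <;> simp
    refine ⟨fun i => Fin.lastCases (sumEmb n c) (fun j => (sumEmb n (!c)).comp (e' j)) i,
      ?_, ?_, ?_⟩
    · intro i j
      induction i using Fin.lastCases with
      | last =>
        induction j using Fin.lastCases with
        | last => intro h; exact absurd rfl h
        | cast j =>
          intro _ x y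
          simp only [Fin.lastCases_last, Fin.lastCases_castSucc,
            SimpleGraph.Embedding.comp_apply]
          exact sumEmb_ne n hcd x (e' j y)
      | cast i =>
        induction j using Fin.lastCases with
        | last =>
          intro _ x y
          simp only [Fin.lastCases_last, Fin.lastCases_castSucc,
            SimpleGraph.Embedding.comp_apply]
          exact sumEmb_ne n hdc (e' i x) y
        | cast j =>
          intro hij x y
          simp only [Fin.lastCases_castSucc, SimpleGraph.Embedding.comp_apply]
          intro hEq
          exact h1 i j (fun hh => hij (by rw [hh])) x y ((sumEmb n (!c)).injective hEq)
    · intro i j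
      induction i using Fin.lastCases with
      | last =>
        induction j using Fin.lastCases with
        | last => intro h; exact absurd rfl h
        | cast j =>
          intro _ x y
          simp only [Fin.lastCases_last, Fin.lastCases_castSucc,
            SimpleGraph.Embedding.comp_apply]
          exact sumEmb_not_adj n hcd x (e' j y)
      | cast i =>
        induction j using Fin.lastCases with
        | last =>
          intro _ x y
          simp only [Fin.lastCases_last, Fin.lastCases_castSucc,
            SimpleGraph.Embedding.comp_apply]
          exact sumEmb_not_adj n hdc (e' i x) y
        | cast j =>
          intro hij x y
          simp only [Fin.lastCases_castSucc, SimpleGraph.Embedding.comp_apply]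
          intro hA
          exact h2 i j (fun hh => hij (by rw [hh])) x y
            ((sumEmb n (!c)).map_adj_iff.mp hA)
    · intro i
      induction i using Fin.lastCases with
      | last =>
        intro x
        simp only [Fin.lastCases_last, Fin.val_last]
        exact htop x
      | cast i =>
        intro x
        simp only [Fin.lastCases_castSucc, SimpleGraph.Embedding.comp_apply,
          Fin.coe_castSucc]
        constructor
        · intro hα hx; exact hbot _ ((h3 i x).1 hα hx)
        · intro hα hx; exact hbot _ ((h3 i x).2 hα hx)


theorem stmt1 (k : ℕ) (hk : 2 ≤ k) (α : Fin (k - 1) → Bool) :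
    ∃ e : (i : Fin (k - 1)) → (XGraph ((i : ℕ) + 1) ↪g XGraph k),
      (∀ i j : Fin (k - 1), i ≠ j → ∀ x y, e i x ≠ e j y) ∧
      (∀ i j : Fin (k - 1), i ≠ j → ∀ x y, ¬ (XGraph k).Adj (e i x) (e j y)) ∧
      (∀ i : Fin (k - 1), ∀ x : XV ((i : ℕ) + 1),
        (α i = true → XSide ((i : ℕ) + 1) x = true → XSide k (e i x) = true) ∧
        (α i = false → XSide ((i : ℕ) + 1) x = false → XSide k (e i x) = true)) := by
  obtain ⟨n, rfl⟩ : ∃ n, k = n + 2 := ⟨k - 2, by omega⟩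
  exact key n true α
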